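/- Let k be a field and let G be a free group on two generators a and b. Then the right ideals (a-1)kG and (b-1)kG of the group ring kG intersect trivially: (a-1)kG ∩ (b-1)kG = 0. -/

import Mathlib

open FreeGroup

-- word-level lemma: multiplying by a single non-cancelling letter
lemma cons_toWord (x s : Bool) (h : FreeGroup Bool)
    (hh : ∀ p ∈ h.toWord.head?, p ≠ (x, !s)) :
    (FreeGroup.mk [(x, s)] * h).toWord = (x, s) :: h.toWord := by
  conv_lhs => rw [← FreeGroup.mk_toWord (x := h)]
  rw [FreeGroup.mul_mk, FreeGroup.toWord_mk, List.singleton_append,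
    FreeGroup.reduce.cons, FreeGroup.reduce_toWord]
  cases hw : h.toWord with
  | nil => rfl
  | cons hd tl =>
    have hne : hd ≠ (x, !s) := hh hd (by rw [hw]; rfl)
    simp only
    rw [if_neg]
    rintro ⟨h1, h2⟩
    exact hne (by cases hd; simp_all)

lemma pow_toWord (x s : Bool) (n : ℕ) (h : FreeGroup Bool)
    (hh : ∀ p ∈ h.toWord.head?, p.1 ≠ x) :
    ((FreeGroup.mk [(x, s)]) ^ n * h).toWord = List.replicate n (x, s) ++ h.toWord := by
  induction n with
  | zero => simp
  | succ n ih =>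
    rw [pow_succ', mul_assoc, cons_toWord, ih]
    · rw [List.replicate_succ, List.cons_append]
    rw [ih]
    intro p hp hpe
    cases n with
    | zero =>
      simp only [List.replicate_zero, List.nil_append] at hp
      exact hh p hp (by rw [hpe])
    | succ n =>
      rw [List.replicate_succ, List.cons_append, List.head?_cons,
        Option.mem_some_iff] at hp
      rw [← hp] at hpe
      simp at hpe

lemma norm_zpow_mul (x : Bool) (m : ℤ) (hm : m ≠ 0) (h : FreeGroup Bool)
    (hh : ∀ p ∈ h.toWord.head?, p.1 ≠ x) :
    h.norm < (FreeGroup.of x ^ m * h).norm := by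
  have hof : FreeGroup.of x = FreeGroup.mk [(x, true)] := rfl
  have hofi : (FreeGroup.of x)⁻¹ = FreeGroup.mk [(x, false)] := by
    rw [hof, FreeGroup.inv_mk]; rfl
  have hn : 1 ≤ m.natAbs := Int.natAbs_pos.mpr hm
  have key : ∀ s : Bool, (FreeGroup.mk [(x, s)] ^ m.natAbs * h).norm = m.natAbs + h.norm := by
    intro s
    rw [FreeGroup.norm, pow_toWord x s _ h hh, List.length_append, List.length_replicate]
    rfl
  rcases Int.natAbs_eq m with he | he
  · have : FreeGroup.of x ^ m = FreeGroup.mk [(x, true)] ^ m.natAbs := by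
      rw [hof]; nth_rewrite 1 [he]; rw [zpow_natCast]
    rw [this, key true]
    omega
  · have : FreeGroup.of x ^ m = FreeGroup.mk [(x, false)] ^ m.natAbs := by
      nth_rewrite 1 [he]; rw [zpow_neg, zpow_natCast, ← inv_pow, hofi]
    rw [this, key false]
    omega

open Classical in
/-- Sum of coefficients of `v` over the coset `⟨c⟩ g` (as a set `{c^m g}`). -/
noncomputable def cosetSum {k : Type*} [Field k] {G : Type*} [Group G] (c g : G) :
    MonoidAlgebra k G →+ k where
  toFun v := v.coeff.sum fun h r => if ∃ m : ℤ, h = c ^ m * g then r else 0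
  map_zero' := by simp only [MonoidAlgebra.coeff_zero]; exact Finsupp.sum_zero_index
  map_add' v w := by
    simp only [MonoidAlgebra.coeff_add]
    exact Finsupp.sum_add_index (fun a _ => by split <;> rfl)
      (fun a _ b₁ b₂ => by split <;> simp)

open Classical in
lemma cosetSum_single {k : Type*} [Field k] {G : Type*} [Group G] (c g d : G) (r : k) :
    cosetSum c g (MonoidAlgebra.single d r) = if ∃ m : ℤ, d = c ^ m * g then r else 0 := by
  simp only [cosetSum, AddMonoidHom.coe_mk, ZeroHom.coe_mk, MonoidAlgebra.coeff_single]
  rw [Finsupp.sum_single_index (by split <;> rfl)]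

lemma cosetSum_mul_left {k : Type*} [Field k] {G : Type*} [Group G] (c g : G)
    (v : MonoidAlgebra k G) :
    cosetSum c g (MonoidAlgebra.single c (1 : k) * v) = cosetSum c g v := by
  induction v using MonoidAlgebra.induction_linear with
  | zero => simp
  | add f g hf hg => rw [mul_add, map_add, map_add, hf, hg]
  | single d r =>
    rw [MonoidAlgebra.single_mul_single, one_mul, cosetSum_single, cosetSum_single]
    congr 1
    rw [eq_iff_iff]
    constructor
    · rintro ⟨m, hm⟩
      refine ⟨m - 1, ?_⟩
      have : d = c⁻¹ * (c * d) := by group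
      rw [this, hm]
      group
    · rintro ⟨m, hm⟩
      exact ⟨m + 1, by rw [hm]; group⟩

lemma cosetSum_vanish {k : Type*} [Field k] {G : Type*} [Group G] (c g : G)
    (x : MonoidAlgebra k G) :
    cosetSum c g ((MonoidAlgebra.of k G c - 1) * x) = 0 := by
  rw [sub_mul, one_mul, map_sub, MonoidAlgebra.of_apply]
  rw [cosetSum_mul_left, sub_self]

open Classical in
lemma exists_other {k : Type*} [Field k] {G : Type*} [Group G] (c g : G)
    (α : MonoidAlgebra k G) (h0 : cosetSum c g α = 0) (hg : α.coeff g ≠ 0) :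
    ∃ h, α.coeff h ≠ 0 ∧ h ≠ g ∧ ∃ m : ℤ, m ≠ 0 ∧ h = c ^ m * g := by
  by_contra hcon
  push_neg at hcon
  have heq : cosetSum c g α = α.coeff g := by
    simp only [cosetSum, AddMonoidHom.coe_mk, ZeroHom.coe_mk, Finsupp.sum]
    rw [Finset.sum_eq_single_of_mem g (Finsupp.mem_support_iff.mpr hg)]
    · rw [if_pos ⟨0, by simp⟩]
    · intro h hh hne
      rw [if_neg]
      rintro ⟨m, hm⟩
      have hm0 : m ≠ 0 := by rintro rfl; apply hne; simpa using hm
      exact hcon h (Finsupp.mem_support_iff.mp hh) hne m hm0 hm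
  rw [h0] at heq
  exact hg heq.symm

/-- For a field `k` and the free group `G` on two generators `a`, `b`,
the right ideals `(a-1)kG` and `(b-1)kG` of the group ring `kG` intersect trivially. -/
theorem stmt_0 (k : Type*) [Field k]
    (a b : FreeGroup Bool) (ha : a = FreeGroup.of true) (hb : b = FreeGroup.of false)
    (α : MonoidAlgebra k (FreeGroup Bool))
    (hαa : ∃ x, α = (MonoidAlgebra.of k (FreeGroup Bool) a - 1) * x)
    (hαb : ∃ y, α = (MonoidAlgebra.of k (FreeGroup Bool) b - 1) * y) :
    α = 0 := by
  by_contra hα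
  obtain ⟨g, hgs, hmax⟩ := Finset.exists_max_image α.coeff.support FreeGroup.norm
    (Finsupp.support_nonempty_iff.mpr (by simpa using hα))
  have hg : α.coeff g ≠ 0 := Finsupp.mem_support_iff.mp hgs
  have step : ∀ c : FreeGroup Bool,
      (∃ y, α = (MonoidAlgebra.of k (FreeGroup Bool) c - 1) * y) →
      (∀ m : ℤ, m ≠ 0 → g.norm < (c ^ m * g).norm) → False := by
    rintro c ⟨y, hy⟩ hinc
    have h0 : cosetSum c g α = 0 := by rw [hy]; exact cosetSum_vanish c g y
    obtain ⟨h, hαh, hne, m, hm0, hm⟩ := exists_other c g α h0 hg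
    have := hmax h (Finsupp.mem_support_iff.mpr hαh)
    rw [hm] at this
    exact absurd (hinc m hm0) (not_lt.mpr this)
  cases hw : g.toWord with
  | nil =>
    refine step a hαa fun m hm => ?_
    rw [ha]
    exact norm_zpow_mul true m hm g (by rw [hw]; simp)
  | cons p t =>
    cases hp : p.1 with
    | true =>
      refine step b hαb fun m hm => ?_
      rw [hb]
      refine norm_zpow_mul false m hm g ?_
      intro q hq
      rw [hw, List.head?_cons, Option.mem_some_iff] at hq
      rw [← hq, hp]
      simp
    | false =>
      refine step a hαa fun m hm => ?_
      rw [ha]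
      refine norm_zpow_mul true m hm g ?_
      intro q hq
      rw [hw, List.head?_cons, Option.mem_some_iff] at hq
      rw [← hq, hp]
      simp
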